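/- Let 1 < p < 2. There exists a constant C_p > 0 such that for all a, b ∈ ℝ^N with |a| + |b| > 0: (max_{0 ≤ s ≤ 1} |a + s b|)^{p−2} ≤ ∫₀¹ |a + s b|^{p−2} ds ≤ C_p (max_{0 ≤ s ≤ 1} |a + s b|)^{p−2}. -/

import Mathlib

open MeasureTheory intervalIntegral Set Real

lemma aux_sqrt_add {x y : ℝ} (hx : 0 ≤ x) (hy : 0 ≤ y) :
    Real.sqrt (x + y) ≤ Real.sqrt x + Real.sqrt y := by
  have h : x + y ≤ (Real.sqrt x + Real.sqrt y) ^ 2 := by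
    nlinarith [Real.sq_sqrt hx, Real.sq_sqrt hy, Real.sqrt_nonneg x, Real.sqrt_nonneg y]
  calc Real.sqrt (x + y) ≤ Real.sqrt ((Real.sqrt x + Real.sqrt y) ^ 2) := Real.sqrt_le_sqrt h
    _ = _ := Real.sqrt_sq (by positivity)

lemma aux_abs_intble {r : ℝ} (hr : -1 < r) (a b : ℝ) :
    IntervalIntegrable (fun u : ℝ => |u| ^ r) MeasureTheory.volume a b := by
  have hpos : ∀ c : ℝ, 0 ≤ c →
      IntervalIntegrable (fun u : ℝ => |u| ^ r) MeasureTheory.volume 0 c := by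
    intro c hc
    rw [intervalIntegrable_iff, uIoc_of_le hc]
    exact (intervalIntegrable_rpow' hr (a := 0) (b := c)).1.congr_fun
      (fun x hx => by rw [abs_of_pos hx.1]) measurableSet_Ioc
  have hall : ∀ c : ℝ, IntervalIntegrable (fun u : ℝ => |u| ^ r) MeasureTheory.volume 0 c := by
    intro c
    rcases le_or_gt 0 c with hc | hc
    · exact hpos c hc
    · rw [IntervalIntegrable.iff_comp_neg]
      simp only [abs_neg, neg_zero]
      exact hpos (-c) (by linarith)
  exact (hall a).symm.trans (hall b)

lemma aux_shift_intble {r : ℝ} (hr : -1 < r) (c a b : ℝ) :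
    IntervalIntegrable (fun u : ℝ => |u - c| ^ r) MeasureTheory.volume a b := by
  have h := (aux_abs_intble hr (a - c) (b - c)).comp_sub_right c
  have h2 : a - c + c = a := by ring
  have h3 : b - c + c = b := by ring
  rwa [h2, h3] at h

lemma aux_abs_int_val {r : ℝ} (hr : -1 < r) (hr0 : r < 0) (s₀ : ℝ)
    (hs₀ : s₀ ∈ Set.Icc (-1 : ℝ) 2) :
    (∫ s in (0:ℝ)..1, |s - s₀| ^ r) ≤ 4 / (r + 1) := by
  have hnn : ∀ s : ℝ, 0 ≤ |s - s₀| ^ r := fun s => Real.rpow_nonneg (abs_nonneg _) r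
  have hbig : IntervalIntegrable (fun s : ℝ => |s - s₀| ^ r) MeasureTheory.volume
      (s₀ - 2) (s₀ + 2) := aux_shift_intble hr s₀ _ _
  have step1 : (∫ s in (0:ℝ)..1, |s - s₀| ^ r)
      ≤ ∫ s in (s₀ - 2)..(s₀ + 2), |s - s₀| ^ r := by
    apply intervalIntegral.integral_mono_interval (by linarith [hs₀.2]) zero_le_one
      (by linarith [hs₀.1]) (Filter.Eventually.of_forall hnn) hbig
  have step2 : (∫ s in (s₀ - 2)..(s₀ + 2), |s - s₀| ^ r) = ∫ u in (-2:ℝ)..2, |u| ^ r := by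
    have := intervalIntegral.integral_comp_sub_right (a := s₀ - 2) (b := s₀ + 2)
      (fun u : ℝ => |u| ^ r) s₀
    have e1 : s₀ - 2 - s₀ = (-2 : ℝ) := by ring
    have e2 : s₀ + 2 - s₀ = (2 : ℝ) := by ring
    rw [e1, e2] at this
    exact this
  have hpos2 : (∫ u in (0:ℝ)..2, |u| ^ r) = 2 ^ (r + 1) / (r + 1) := by
    have hcongr : (∫ u in (0:ℝ)..2, |u| ^ r) = ∫ u in (0:ℝ)..2, u ^ r := by
      apply intervalIntegral.integral_congr
      intro u hu
      rw [Set.uIcc_of_le (by norm_num : (0:ℝ) ≤ 2)] at hu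
      show |u| ^ r = u ^ r
      rw [abs_of_nonneg hu.1]
    rw [hcongr, integral_rpow (Or.inl hr), Real.zero_rpow (by linarith : r + 1 ≠ 0)]
    ring
  have hneg2 : (∫ u in (-2:ℝ)..0, |u| ^ r) = ∫ u in (0:ℝ)..2, |u| ^ r := by
    have := intervalIntegral.integral_comp_neg (a := 0) (b := 2) (fun u : ℝ => |u| ^ r)
    simp only [abs_neg, neg_zero] at this
    exact this.symm
  have hsplit : (∫ u in (-2:ℝ)..2, |u| ^ r)
      = (∫ u in (-2:ℝ)..0, |u| ^ r) + ∫ u in (0:ℝ)..2, |u| ^ r :=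
    (intervalIntegral.integral_add_adjacent_intervals (aux_abs_intble hr _ _)
      (aux_abs_intble hr _ _)).symm
  have h2r : (2:ℝ) ^ (r + 1) ≤ 2 := by
    calc (2:ℝ) ^ (r + 1) ≤ 2 ^ (1:ℝ) :=
      Real.rpow_le_rpow_of_exponent_le one_le_two (by linarith)
    _ = 2 := Real.rpow_one 2
  have hr1 : 0 < r + 1 := by linarith
  calc (∫ s in (0:ℝ)..1, |s - s₀| ^ r) ≤ ∫ s in (s₀ - 2)..(s₀ + 2), |s - s₀| ^ r := step1
    _ = ∫ u in (-2:ℝ)..2, |u| ^ r := step2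
    _ = (∫ u in (-2:ℝ)..0, |u| ^ r) + ∫ u in (0:ℝ)..2, |u| ^ r := hsplit
    _ = 2 ^ (r + 1) / (r + 1) + 2 ^ (r + 1) / (r + 1) := by rw [hneg2, hpos2]
    _ ≤ 2 / (r + 1) + 2 / (r + 1) := by gcongr
    _ = 4 / (r + 1) := by ring

set_option maxHeartbeats 2000000 in
theorem stmt8 (p : ℝ) (hp1 : 1 < p) (hp2 : p < 2) :
    ∃ C : ℝ, 0 < C ∧ ∀ (N : ℕ) (a b : EuclideanSpace ℝ (Fin N)),
      0 < ‖a‖ + ‖b‖ →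
      (sSup ((fun s : ℝ => ‖a + s • b‖) '' Set.Icc 0 1)) ^ (p - 2)
          ≤ (∫ s in (0:ℝ)..1, ‖a + s • b‖ ^ (p - 2)) ∧
      (∫ s in (0:ℝ)..1, ‖a + s • b‖ ^ (p - 2))
          ≤ C * (sSup ((fun s : ℝ => ‖a + s • b‖) '' Set.Icc 0 1)) ^ (p - 2) := by
  have hp1' : 0 < p - 1 := by linarith
  refine ⟨15 / (p - 1), div_pos (by norm_num) hp1', ?_⟩
  have hC1 : (1:ℝ) ≤ 15 / (p - 1) := by
    rw [le_div_iff₀ hp1']; linarith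
  intro N a b hab
  by_cases hb : b = 0
  · -- constant case
    subst hb
    simp only [smul_zero, add_zero, norm_zero] at *
    have ha : 0 < ‖a‖ := hab
    rw [Set.Nonempty.image_const ⟨0, by constructor <;> norm_num⟩, csSup_singleton,
      intervalIntegral.integral_const]
    simp only [sub_zero, one_smul]
    refine ⟨le_refl _, ?_⟩
    nlinarith [Real.rpow_nonneg (norm_nonneg a) (p - 2), hC1,
      Real.rpow_pos_of_pos ha (p - 2)]
  · -- b ≠ 0
    have hcont : Continuous fun s : ℝ => ‖a + s • b‖ :=
      (continuous_const.add (continuous_id.smul continuous_const)).norm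
    obtain ⟨sm, hsm, hMeq, hmax'⟩ := isCompact_Icc.exists_sSup_image_eq_and_ge
      (⟨0, by constructor <;> norm_num⟩ : (Set.Icc (0:ℝ) 1).Nonempty) hcont.continuousOn
    set M := sSup ((fun s : ℝ => ‖a + s • b‖) '' Set.Icc 0 1) with hMdef
    have hmax : ∀ s ∈ Set.Icc (0:ℝ) 1, ‖a + s • b‖ ≤ M := fun s hs =>
      hMeq ▸ hmax' s hs
    have hM : 0 < M := by
      by_contra hcon
      push_neg at hcon
      have h0 : ‖a + (0:ℝ) • b‖ ≤ M := hmax 0 ⟨le_refl _, zero_le_one⟩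
      have h1 : ‖a + (1:ℝ) • b‖ ≤ M := hmax 1 ⟨zero_le_one, le_refl _⟩
      simp only [zero_smul, add_zero, one_smul] at h0 h1
      have ha0 : a = 0 := norm_le_zero_iff.mp (h0.trans hcon)
      have hab0 : a + b = 0 := norm_le_zero_iff.mp (h1.trans hcon)
      apply hb
      rw [ha0, zero_add] at hab0
      exact hab0
    -- geometric setup
    set B := ‖b‖ with hBdef
    have hB : 0 < B := norm_pos_iff.mpr hb
    set t := (inner ℝ a b : ℝ) with htdef
    set s₀ := -t / B ^ 2 with hs₀def
    set d2 := ‖a‖ ^ 2 - t ^ 2 / B ^ 2 with hd2def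
    have hB2 : B ^ 2 ≠ 0 := by positivity
    have hgsq : ∀ s : ℝ, ‖a + s • b‖ ^ 2 = d2 + B ^ 2 * (s - s₀) ^ 2 := by
      intro s
      have h1 : ‖a + s • b‖ ^ 2 = ‖a‖ ^ 2 + 2 * (s * t) + s ^ 2 * B ^ 2 := by
        rw [norm_add_sq_real, real_inner_smul_right, norm_smul]
        simp only [Real.norm_eq_abs, mul_pow, sq_abs]
        rfl
      rw [h1, hd2def, hs₀def]
      field_simp
      ring
    have hd2 : 0 ≤ d2 := by
      have hcs : |t| ≤ ‖a‖ * B := abs_real_inner_le_norm a b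
      have ht2 : t ^ 2 ≤ ‖a‖ ^ 2 * B ^ 2 := by nlinarith [abs_nonneg t, sq_abs t]
      rw [hd2def]
      rw [sub_nonneg, div_le_iff₀ (by positivity : (0:ℝ) < B ^ 2)]
      linarith
    have hgnn : ∀ s : ℝ, (0:ℝ) ≤ ‖a + s • b‖ := fun s => norm_nonneg _
    have ge2 : ∀ s : ℝ, B * |s - s₀| ≤ ‖a + s • b‖ := by
      intro s
      nlinarith [hgsq s, hd2, hgnn s, sq_abs (s - s₀), abs_nonneg (s - s₀), hB.le,
        mul_nonneg hB.le (abs_nonneg (s - s₀))]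
    have ge1 : ∀ s : ℝ, Real.sqrt d2 ≤ ‖a + s • b‖ := by
      intro s
      have h : d2 ≤ ‖a + s • b‖ ^ 2 := by nlinarith [hgsq s, sq_nonneg (s - s₀), sq_nonneg B]
      calc Real.sqrt d2 ≤ Real.sqrt (‖a + s • b‖ ^ 2) := Real.sqrt_le_sqrt h
        _ = ‖a + s • b‖ := Real.sqrt_sq (hgnn s)
    have le3 : ∀ s : ℝ, ‖a + s • b‖ ≤ Real.sqrt d2 + B * |s - s₀| := by
      intro s
      have h : ‖a + s • b‖ = Real.sqrt (d2 + B ^ 2 * (s - s₀) ^ 2) := by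
        rw [← hgsq s, Real.sqrt_sq (hgnn s)]
      rw [h]
      refine (aux_sqrt_add hd2 (by positivity)).trans ?_
      have h2 : Real.sqrt (B ^ 2 * (s - s₀) ^ 2) = B * |s - s₀| := by
        rw [Real.sqrt_mul (sq_nonneg B), Real.sqrt_sq hB.le, Real.sqrt_sq_eq_abs]
      rw [h2]
    have hpos : ∀ s : ℝ, s ≠ s₀ → 0 < ‖a + s • b‖ := fun s hs =>
      lt_of_lt_of_le (mul_pos hB (abs_pos.mpr (sub_ne_zero.mpr hs))) (ge2 s)
    have hrneg : p - 2 ≤ 0 := by linarith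
    have hr : -1 < p - 2 := by linarith
    -- integrability
    have hInt : IntervalIntegrable (fun s : ℝ => ‖a + s • b‖ ^ (p - 2))
        MeasureTheory.volume 0 1 := by
      rcases hd2.eq_or_lt with heq | hlt
      · -- d2 = 0 : function equals B^(p-2) * |s - s₀|^(p-2)
        have hgeq : ∀ s : ℝ, ‖a + s • b‖ = B * |s - s₀| := by
          intro s
          have h : ‖a + s • b‖ = Real.sqrt (d2 + B ^ 2 * (s - s₀) ^ 2) := by
            rw [← hgsq s, Real.sqrt_sq (hgnn s)]
          rw [h, ← heq, zero_add, Real.sqrt_mul (sq_nonneg B), Real.sqrt_sq hB.le,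
            Real.sqrt_sq_eq_abs]
        have heqf : (fun s : ℝ => ‖a + s • b‖ ^ (p - 2))
            = fun s : ℝ => B ^ (p - 2) * |s - s₀| ^ (p - 2) := by
          funext s
          rw [hgeq s, Real.mul_rpow hB.le (abs_nonneg _)]
        rw [heqf]
        exact (aux_shift_intble hr s₀ 0 1).const_mul _
      · -- d2 > 0 : continuous
        have hgne : ∀ s : ℝ, ‖a + s • b‖ ≠ 0 := fun s =>
          ne_of_gt (lt_of_lt_of_le (Real.sqrt_pos.mpr hlt) (ge1 s))
        exact (hcont.rpow_const (fun s => Or.inl (hgne s))).intervalIntegrable 0 1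
    have hne_ae : ∀ᵐ s : ℝ ∂MeasureTheory.volume, s ≠ s₀ := by
      rw [MeasureTheory.ae_iff]
      have : {x : ℝ | ¬x ≠ s₀} = {s₀} := by ext x; simp
      rw [this]
      exact Real.volume_singleton
    constructor
    · -- lower bound
      have hconst : (∫ _ in (0:ℝ)..1, M ^ (p - 2)) = M ^ (p - 2) := by
        simp [intervalIntegral.integral_const]
      rw [← hconst]
      apply intervalIntegral.integral_mono_ae_restrict zero_le_one
        (intervalIntegrable_const) hInt
      filter_upwards [MeasureTheory.ae_restrict_mem measurableSet_Icc,
        MeasureTheory.ae_restrict_of_ae hne_ae] with s hs hsne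
      exact Real.rpow_le_rpow_of_nonpos (hpos s hsne) (hmax s hs) hrneg
    · -- upper bound
      have hMp : 0 < M ^ (p - 2) := Real.rpow_pos_of_pos hM _
      have hM3 : (0:ℝ) < M / 3 := by linarith
      have hM3p : (M / 3) ^ (p - 2) ≤ 3 * M ^ (p - 2) := by
        rw [Real.div_rpow hM.le (by norm_num : (0:ℝ) ≤ 3)]
        rw [div_le_iff₀ (Real.rpow_pos_of_pos (by norm_num : (0:ℝ) < 3) _)]
        have h31 : (1:ℝ) ≤ 3 * 3 ^ (p - 2) := by
          have : (3:ℝ) ^ (0:ℝ) ≤ 3 ^ (p - 1) :=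
            Real.rpow_le_rpow_of_exponent_le (by norm_num) (by linarith)
          rw [Real.rpow_zero] at this
          have h3 : (3:ℝ) ^ (p - 1) = 3 * 3 ^ (p - 2) := by
            rw [show p - 1 = 1 + (p - 2) by ring, Real.rpow_add (by norm_num), Real.rpow_one]
          linarith [h3 ▸ this]
        nlinarith
      by_cases hgood : ∀ s ∈ Set.Icc (0:ℝ) 1, M / 3 ≤ ‖a + s • b‖
      · -- good case
        have hle : (∫ s in (0:ℝ)..1, ‖a + s • b‖ ^ (p - 2))
            ≤ ∫ _ in (0:ℝ)..1, (M / 3) ^ (p - 2) := by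
          apply intervalIntegral.integral_mono_on zero_le_one hInt intervalIntegrable_const
          intro s hs
          exact Real.rpow_le_rpow_of_nonpos hM3 (hgood s hs) hrneg
        have hconst : (∫ _ in (0:ℝ)..1, (M / 3) ^ (p - 2)) = (M / 3) ^ (p - 2) := by
          simp [intervalIntegral.integral_const]
        rw [hconst] at hle
        refine hle.trans (hM3p.trans ?_)
        have : (3:ℝ) ≤ 15 / (p - 1) := by
          rw [le_div_iff₀ hp1']; linarith
        exact mul_le_mul_of_nonneg_right this hMp.le
      · -- bad case
        push_neg at hgood
        obtain ⟨s₁, hs₁, hgs₁⟩ := hgood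
        have hd : Real.sqrt d2 < M / 3 := lt_of_le_of_lt (ge1 s₁) hgs₁
        have hB1 : B * |s₁ - s₀| < M / 3 := lt_of_le_of_lt (ge2 s₁) hgs₁
        have habs : |sm - s₀| ≤ |sm - s₁| + |s₁ - s₀| := abs_sub_le sm s₁ s₀
        have habs1 : |sm - s₁| ≤ 1 := by
          rw [abs_sub_le_iff]
          constructor <;> linarith [hsm.1, hsm.2, hs₁.1, hs₁.2]
        have hMB : M / 3 < B := by
          have hMeq' : M = ‖a + sm • b‖ := hMeq
          have h2 := le3 sm
          have h5 : B * |sm - s₀| ≤ B * (|sm - s₁| + |s₁ - s₀|) :=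
            mul_le_mul_of_nonneg_left habs hB.le
          have h6 : B * |sm - s₁| ≤ B * 1 := mul_le_mul_of_nonneg_left habs1 hB.le
          linarith [hd, hB1, h2, h5, h6]
        have hs₀mem : s₀ ∈ Set.Icc (-1:ℝ) 2 := by
          have habs2 : |s₁ - s₀| < 1 := by
            by_contra hcon
            push_neg at hcon
            have : B * 1 ≤ B * |s₁ - s₀| := mul_le_mul_of_nonneg_left hcon hB.le
            linarith
          rw [abs_lt] at habs2
          constructor <;> [linarith [hs₁.1]; linarith [hs₁.2]]
        have hBp : B ^ (p - 2) ≤ (M / 3) ^ (p - 2) :=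
          Real.rpow_le_rpow_of_nonpos hM3 hMB.le hrneg
        have hIntAbs : IntervalIntegrable (fun s : ℝ => B ^ (p - 2) * |s - s₀| ^ (p - 2))
            MeasureTheory.volume 0 1 := (aux_shift_intble hr s₀ 0 1).const_mul _
        have hle : (∫ s in (0:ℝ)..1, ‖a + s • b‖ ^ (p - 2))
            ≤ ∫ s in (0:ℝ)..1, B ^ (p - 2) * |s - s₀| ^ (p - 2) := by
          apply intervalIntegral.integral_mono_ae_restrict zero_le_one hInt hIntAbs
          filter_upwards [MeasureTheory.ae_restrict_of_ae hne_ae] with s hsne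
          rw [← Real.mul_rpow hB.le (abs_nonneg _)]
          exact Real.rpow_le_rpow_of_nonpos
            (mul_pos hB (abs_pos.mpr (sub_ne_zero.mpr hsne))) (ge2 s) hrneg
        have hmul : (∫ s in (0:ℝ)..1, B ^ (p - 2) * |s - s₀| ^ (p - 2))
            = B ^ (p - 2) * ∫ s in (0:ℝ)..1, |s - s₀| ^ (p - 2) :=
          intervalIntegral.integral_const_mul _ _
        have hval : (∫ s in (0:ℝ)..1, |s - s₀| ^ (p - 2)) ≤ 4 / (p - 1) := by
          have := aux_abs_int_val hr (by linarith) s₀ hs₀mem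
          rwa [show p - 2 + 1 = p - 1 by ring] at this
        have hint_nn : (0:ℝ) ≤ ∫ s in (0:ℝ)..1, |s - s₀| ^ (p - 2) :=
          intervalIntegral.integral_nonneg zero_le_one
            (fun s _ => Real.rpow_nonneg (abs_nonneg _) _)
        have hBnn : (0:ℝ) ≤ B ^ (p - 2) := Real.rpow_nonneg hB.le _
        calc (∫ s in (0:ℝ)..1, ‖a + s • b‖ ^ (p - 2))
            ≤ B ^ (p - 2) * ∫ s in (0:ℝ)..1, |s - s₀| ^ (p - 2) := by rw [← hmul]; exact hle
          _ ≤ (3 * M ^ (p - 2)) * (4 / (p - 1)) := by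
              apply mul_le_mul (hBp.trans hM3p) hval hint_nn (by linarith [hMp])
          _ = (12 / (p - 1)) * M ^ (p - 2) := by ring
          _ ≤ (15 / (p - 1)) * M ^ (p - 2) := by
              apply mul_le_mul_of_nonneg_right _ hMp.le
              gcongr <;> norm_num
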